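/- Assume m ≥ n ≥ 3 and S_a ∪ S_b (a ≤ b, a+b = m+n−3) is the terminal diagonal of a hamiltonian path H in the m×n projective checkerboard B(m,n), with initial square ι and terminal square τ. Let τ_+ be the southeasternmost square of S_b. If every non-terminal diagonal travels north in H, then a ≤ m−2 ≤ b, and at least one of the following holds: (i) ι = τ_+E; (ii) the inverse of τ equals τ_+E; (iii) m = n = a+2 = b+1 and either ι or the inverse of τ equals the transpose of τ_+E (where the transpose of (p,q) is (q,p)); (iv) a+1 = b = n = m−2 and either ι or the inverse of τ equals τ_+ = (n,0). -/

import Mathlib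

namespace ProjBoard

/-- `(p,q)` is a square of the `m × n` board. -/
def Sq (m n : ℕ) (s : ℕ × ℕ) : Prop := s.1 < m ∧ s.2 < n

/-- The east move on the `m × n` projective checkerboard. -/
def moveE (m n : ℕ) (s : ℕ × ℕ) : ℕ × ℕ :=
  if s.1 < m - 1 then (s.1 + 1, s.2) else (0, n - 1 - s.2)

/-- The north move on the `m × n` projective checkerboard. -/
def moveN (m n : ℕ) (s : ℕ × ℕ) : ℕ × ℕ :=
  if s.2 < n - 1 then (s.1, s.2 + 1) else (m - 1 - s.1, 0)

/-- Directed edge of the board: from a square `s` to `sE` or `sN`. -/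
def Edge (m n : ℕ) (s t : ℕ × ℕ) : Prop :=
  Sq m n s ∧ (t = moveE m n s ∨ t = moveN m n s)

/-- A hamiltonian path, recorded as the list of squares it visits in order. -/
def IsHamPath (m n : ℕ) (l : List (ℕ × ℕ)) : Prop :=
  l.Chain' (Edge m n) ∧ l.Nodup ∧ ∀ s, Sq m n s ↔ s ∈ l

/-- A hamiltonian path with initial square `ι` and terminal square `τ`. -/
def HamPathFromTo (m n : ℕ) (ι τ : ℕ × ℕ) (l : List (ℕ × ℕ)) : Prop :=
  IsHamPath m n l ∧ l.head? = some ι ∧ l.getLast? = some τ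

/-- The square `s` travels east in the hamiltonian path `l`:
the edge from `s` to `sE` belongs to `l`. -/
def TravelsEast (m n : ℕ) (l : List (ℕ × ℕ)) (s : ℕ × ℕ) : Prop :=
  ∃ i : ℕ, l[i]? = some s ∧ l[i + 1]? = some (moveE m n s)

/-- The square `s` travels north in the hamiltonian path `l`:
the edge from `s` to `sN` belongs to `l`. -/
def TravelsNorth (m n : ℕ) (l : List (ℕ × ℕ)) (s : ℕ × ℕ) : Prop :=
  ∃ i : ℕ, l[i]? = some s ∧ l[i + 1]? = some (moveN m n s)

/-- Two squares lie in the same (direction-forcing) diagonal. -/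
def SameDiag (m n : ℕ) (s t : ℕ × ℕ) : Prop :=
  s.1 + s.2 = t.1 + t.2 ∨ s.1 + s.2 + (t.1 + t.2) = m + n - 3

/-- The southeasternmost square of the subdiagonal `S_b`. -/
def tauPlus (m n b : ℕ) : ℕ × ℕ :=
  if b ≤ m - 1 then (b, 0) else (m - 1, b - (m - 1))

/-- Auxiliary: a directed edge of the path, recorded as consecutive entries of the list. -/
def EdgeIn (l : List (ℕ × ℕ)) (r x : ℕ × ℕ) : Prop :=
  ∃ i : ℕ, l[i]? = some r ∧ l[i + 1]? = some x

lemma lt_length_of_getElem? {α : Type*} {l : List α} {i : ℕ} {x : α}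
    (h : l[i]? = some x) : i < l.length := by
  by_contra hc
  rw [List.getElem?_eq_none (Nat.le_of_not_lt hc)] at h
  cases h

lemma idx_unique {l : List (ℕ × ℕ)} (hnd : l.Nodup) {i j : ℕ} {x : ℕ × ℕ}
    (h1 : l[i]? = some x) (h2 : l[j]? = some x) : i = j :=
  (List.getElem?_inj (lt_length_of_getElem? h1) hnd).mp (h1.trans h2.symm)

lemma edge_src_unique {l : List (ℕ × ℕ)} (hnd : l.Nodup) {x y y' : ℕ × ℕ}
    (h : EdgeIn l x y) (h' : EdgeIn l x y') : y = y' := by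
  obtain ⟨i, hi, hi1⟩ := h
  obtain ⟨j, hj, hj1⟩ := h'
  have hij : i = j := idx_unique hnd hi hj
  subst hij
  rw [hi1] at hj1
  exact Option.some_inj.mp hj1

lemma edge_tgt_unique {l : List (ℕ × ℕ)} (hnd : l.Nodup) {x r r' : ℕ × ℕ}
    (h : EdgeIn l r x) (h' : EdgeIn l r' x) : r = r' := by
  obtain ⟨i, hi, hi1⟩ := h
  obtain ⟨j, hj, hj1⟩ := h'
  have hij : i + 1 = j + 1 := idx_unique hnd hi1 hj1
  have hij' : i = j := by omega
  subst hij'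
  rw [hi] at hj
  exact Option.some_inj.mp hj

/-- The key "no cycle" lemma: a nonempty set closed under path-successors is impossible. -/
lemma closed_false {l : List (ℕ × ℕ)} (hnd : l.Nodup) (U : ℕ × ℕ → Prop) (x₀ : ℕ × ℕ)
    (hx0 : U x₀) (hstep : ∀ x, U x → ∃ y, U y ∧ EdgeIn l x y) : False := by
  have key : ∀ k : ℕ, ∃ x i, U x ∧ l[i]? = some x ∧ k ≤ i := by
    intro k
    induction k with
    | zero =>
        obtain ⟨y, _, i, hi, _⟩ := hstep x₀ hx0
        exact ⟨x₀, i, hx0, hi, Nat.zero_le _⟩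
    | succ k ih =>
        obtain ⟨x, i, hU, hi, hk⟩ := ih
        obtain ⟨y, hUy, j, hj, hj1⟩ := hstep x hU
        have hji : j = i := idx_unique hnd hj hi
        subst hji
        exact ⟨y, j + 1, hUy, hj1, by omega⟩
  obtain ⟨x, i, _, hi, hk⟩ := key l.length
  have := lt_length_of_getElem? hi
  omega

lemma head?_eq_getElem? {α : Type*} (l : List α) : l.head? = l[0]? := by
  cases l <;> simp

section Path

variable {m n : ℕ} {ι τ : ℕ × ℕ} {l : List (ℕ × ℕ)}

lemma succ_exists (hl : HamPathFromTo m n ι τ l) {x : ℕ × ℕ} (hx : Sq m n x) (hxτ : x ≠ τ) :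
    EdgeIn l x (moveE m n x) ∨ EdgeIn l x (moveN m n x) := by
  obtain ⟨⟨hch, hnd, hmem⟩, hhead, hlast⟩ := hl
  obtain ⟨i, hilen, hix⟩ := List.getElem_of_mem ((hmem x).mp hx)
  have hx' : l[i]? = some x := by rw [List.getElem?_eq_getElem hilen, hix]
  have hi1 : i + 1 < l.length := by
    rcases Nat.lt_or_ge (i + 1) l.length with h | h
    · exact h
    · exfalso
      apply hxτ
      rw [List.getLast?_eq_getElem?] at hlast
      have hieq : i = l.length - 1 := by omega
      rw [hieq] at hx'
      rw [hx'] at hlast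
      exact Option.some_inj.mp hlast
  have hedge := List.isChain_iff_getElem.mp hch i (by omega)
  obtain ⟨-, hEN⟩ := hedge
  rw [hix] at hEN
  have hx1 : l[i + 1]? = some l[i + 1] := List.getElem?_eq_getElem hi1
  rcases hEN with h | h
  · left; exact ⟨i, hx', by rw [hx1, h]⟩
  · right; exact ⟨i, hx', by rw [hx1, h]⟩

lemma pred_exists (hl : HamPathFromTo m n ι τ l) {x : ℕ × ℕ} (hx : Sq m n x) (hxι : x ≠ ι) :
    ∃ r, Sq m n r ∧ EdgeIn l r x ∧ (x = moveE m n r ∨ x = moveN m n r) := by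
  obtain ⟨⟨hch, hnd, hmem⟩, hhead, hlast⟩ := hl
  obtain ⟨i, hilen, hix⟩ := List.getElem_of_mem ((hmem x).mp hx)
  have hx' : l[i]? = some x := by rw [List.getElem?_eq_getElem hilen, hix]
  have hi0 : i ≠ 0 := by
    intro h
    apply hxι
    rw [head?_eq_getElem? l] at hhead
    rw [h] at hx'
    rw [hx'] at hhead
    exact Option.some_inj.mp hhead
  obtain ⟨j, rfl⟩ : ∃ j, i = j + 1 := ⟨i - 1, by omega⟩
  have hedge := List.isChain_iff_getElem.mp hch j (by omega)
  obtain ⟨hsq, hEN⟩ := hedge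
  rw [hix] at hEN
  have hj' : l[j]? = some l[j] := List.getElem?_eq_getElem (by omega)
  exact ⟨l[j], hsq, ⟨j, hj', hx'⟩, hEN⟩

lemma pair_eq {a b c d : ℕ} (h1 : a = c) (h2 : b = d) : (a, b) = (c, d) := by
  rw [h1, h2]

lemma moveE_lt {p q : ℕ} (h : p < m - 1) : moveE m n (p, q) = (p + 1, q) := by
  simp [moveE, h]

lemma moveE_wrap {p q : ℕ} (h : ¬ p < m - 1) : moveE m n (p, q) = (0, n - 1 - q) := by
  simp [moveE, h]

lemma moveN_lt {p q : ℕ} (h : q < n - 1) : moveN m n (p, q) = (p, q + 1) := by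
  simp [moveN, h]

lemma moveN_wrap {p q : ℕ} (h : ¬ q < n - 1) : moveN m n (p, q) = (m - 1 - p, 0) := by
  simp [moveN, h]

lemma moveE_inv {r x : ℕ × ℕ} (hr : Sq m n r) (h : moveE m n r = x) :
    (x.1 ≠ 0 ∧ r = (x.1 - 1, x.2)) ∨ (x.1 = 0 ∧ r = (m - 1, n - 1 - x.2)) := by
  obtain ⟨p, q⟩ := r
  obtain ⟨hp, hq⟩ := hr
  by_cases hp1 : p < m - 1
  · rw [moveE_lt hp1] at h
    subst h
    left
    exact ⟨by simp, by simp⟩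
  · rw [moveE_wrap hp1] at h
    subst h
    right
    refine ⟨rfl, ?_⟩
    simp only [Prod.mk.injEq]
    constructor <;> omega

lemma moveN_inv {r x : ℕ × ℕ} (hr : Sq m n r) (h : moveN m n r = x) :
    (x.2 ≠ 0 ∧ r = (x.1, x.2 - 1)) ∨ (x.2 = 0 ∧ r = (m - 1 - x.1, n - 1)) := by
  obtain ⟨p, q⟩ := r
  obtain ⟨hp, hq⟩ := hr
  by_cases hq1 : q < n - 1
  · rw [moveN_lt hq1] at h
    subst h
    left
    exact ⟨by simp, by simp⟩
  · rw [moveN_wrap hq1] at h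
    subst h
    right
    refine ⟨rfl, ?_⟩
    simp only [Prod.mk.injEq]
    constructor <;> omega

end Path

theorem initIsTermE (m n a b : ℕ) (hnm : n ≤ m) (hn : 3 ≤ n)
    (hab : a ≤ b) (habsum : a + b = m + n - 3)
    (l : List (ℕ × ℕ)) (ι τ : ℕ × ℕ) (hl : HamPathFromTo m n ι τ l)
    (hterm : τ.1 + τ.2 = a ∨ τ.1 + τ.2 = b)
    (hnorth : ∀ s, Sq m n s → s.1 + s.2 ≠ a → s.1 + s.2 ≠ b → TravelsNorth m n l s) :
    (a ≤ m - 2 ∧ m - 2 ≤ b) ∧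
    (ι = moveE m n (tauPlus m n b) ∨
     (m - 1 - τ.1, n - 1 - τ.2) = moveE m n (tauPlus m n b) ∨
     (m = n ∧ n = a + 2 ∧ n = b + 1 ∧
       (ι = (moveE m n (tauPlus m n b)).swap ∨
        (m - 1 - τ.1, n - 1 - τ.2) = (moveE m n (tauPlus m n b)).swap)) ∨
     (a + 1 = b ∧ b = n ∧ n = m - 2 ∧
       (ι = tauPlus m n b ∨ (m - 1 - τ.1, n - 1 - τ.2) = tauPlus m n b))) := by
  have hnd : l.Nodup := hl.1.2.1
  have hm3 : 3 ≤ m := le_trans hn hnm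
  have hN : ∀ p q : ℕ, p < m → q < n → p + q ≠ a → p + q ≠ b →
      EdgeIn l (p, q) (moveN m n (p, q)) := fun p q h1 h2 h3 h4 =>
    hnorth (p, q) ⟨h1, h2⟩ h3 h4
  have hτne : ∀ p q : ℕ, p + q ≠ a → p + q ≠ b → (p, q) ≠ τ := by
    intro p q h1 h2 h
    rcases hterm with ht | ht
    · rw [← h] at ht
      exact h1 ht
    · rw [← h] at ht
      exact h2 ht
  have ham2 : a ≤ m - 2 := by omega
  have hbm2 : m - 2 ≤ b := by
    by_contra hc
    have hb3 : b + 3 ≤ m := by omega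
    apply closed_false hnd (fun x => (x.1 = b + 2 ∨ x.1 = m - 3 - b) ∧ x.2 < n) (b + 2, 0)
      ⟨Or.inl rfl, by omega⟩
    rintro ⟨p, q⟩ ⟨hp, hq⟩
    rcases hp with rfl | rfl
    · refine ⟨moveN m n (b + 2, q), ?_, hN (b + 2) q (by omega) hq (by omega) (by omega)⟩
      by_cases h1 : q < n - 1
      · rw [moveN_lt h1]
        exact ⟨Or.inl rfl, by omega⟩
      · rw [moveN_wrap h1]
        exact ⟨Or.inr (by omega), by omega⟩
    · refine ⟨moveN m n (m - 3 - b, q), ?_, hN (m - 3 - b) q (by omega) hq (by omega) (by omega)⟩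
      by_cases h1 : q < n - 1
      · rw [moveN_lt h1]
        exact ⟨Or.inr rfl, by omega⟩
      · rw [moveN_wrap h1]
        exact ⟨Or.inl (by omega), by omega⟩
  refine ⟨⟨ham2, hbm2⟩, ?_⟩
  rcases (show b = m - 2 ∨ b = m - 1 ∨ m ≤ b by omega) with hb | hb | hb
  · -- CASE A : b = m - 2, a = n - 1, m ≥ n + 1
    have ha : a = n - 1 := by omega
    have hmn1 : n + 1 ≤ m := by omega
    have hτpE : moveE m n (tauPlus m n b) = ((m - 1 : ℕ), (0 : ℕ)) := by
      simp only [tauPlus, if_pos (show b ≤ m - 1 by omega)]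
      rw [moveE_lt (by omega)]
      exact pair_eq (by omega) rfl
    by_cases hτρ : τ = ((0 : ℕ), (n - 1 : ℕ))
    · refine Or.inr (Or.inl ?_)
      have h1 : τ.1 = 0 := by rw [hτρ]
      have h2 : τ.2 = n - 1 := by rw [hτρ]
      rw [hτpE]
      exact pair_eq (by omega) (by omega)
    rcases succ_exists hl (⟨by omega, by omega⟩ : Sq m n ((0 : ℕ), (n - 1 : ℕ)))
        (fun h => hτρ h.symm) with hρE | hρN
    · -- ρ travels east
      have hρE' : EdgeIn l ((0 : ℕ), (n - 1 : ℕ)) ((1 : ℕ), (n - 1 : ℕ)) := by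
        rwa [moveE_lt (by omega)] at hρE
      by_cases hισ : ι = ((m - 1 : ℕ), (0 : ℕ))
      · exact Or.inl (by rw [hτpE, hισ])
      obtain ⟨r, hrsq, hrE, hrEN⟩ :=
        pred_exists hl (⟨by omega, by omega⟩ : Sq m n ((m - 1 : ℕ), (0 : ℕ))) (fun h => hισ h.symm)
      have hrid : r = ((m - 2 : ℕ), (0 : ℕ)) := by
        rcases hrEN with h | h
        · rcases moveE_inv hrsq h.symm with ⟨h1, h2⟩ | ⟨h1, h2⟩
          · have h2' : r = ((m - 1 - 1 : ℕ), (0 : ℕ)) := h2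
            rw [h2']
            exact pair_eq (by omega) rfl
          · exfalso
            have h1' : m - 1 = 0 := h1
            omega
        · rcases moveN_inv hrsq h.symm with ⟨h1, h2⟩ | ⟨h1, h2⟩
          · exact absurd rfl h1
          · exfalso
            have h2' : r = ((m - 1 - (m - 1) : ℕ), (n - 1 : ℕ)) := h2
            have hr' : r = ((0 : ℕ), (n - 1 : ℕ)) := by
              rw [h2']
              exact pair_eq (by omega) rfl
            rw [hr'] at hrE
            have heq := edge_src_unique hnd hrE hρE'
            have h0 : (0 : ℕ) = (n - 1 : ℕ) := congrArg Prod.snd heq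
            omega
      rw [hrid] at hrE
      have hmain : EdgeIn l ((1 : ℕ), (n - 1 : ℕ)) ((m - 2 : ℕ), (0 : ℕ)) → False := by
        intro h1N'
        apply closed_false hnd (fun x => ((x.1 = 0 ∨ x.1 = m - 1) ∧ x.2 < n) ∨
          x = ((1 : ℕ), (n - 1 : ℕ)) ∨ x = ((m - 2 : ℕ), (0 : ℕ))) ((0 : ℕ), (0 : ℕ))
          (Or.inl ⟨Or.inl rfl, by omega⟩)
        rintro ⟨p, q⟩ (⟨hp, hq⟩ | hx | hx)
        · rcases hp with rfl | rfl
          · by_cases hq1 : q = n - 1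
            · subst hq1
              exact ⟨_, Or.inr (Or.inl rfl), hρE'⟩
            · refine ⟨((0 : ℕ), q + 1), Or.inl ⟨Or.inl rfl, by omega⟩, ?_⟩
              have := hN 0 q (by omega) (by omega) (by omega) (by omega)
              rwa [moveN_lt (by omega)] at this
          · by_cases h1 : q < n - 1
            · refine ⟨((m - 1 : ℕ), q + 1), Or.inl ⟨Or.inr rfl, by omega⟩, ?_⟩
              have := hN (m - 1) q (by omega) hq (by omega) (by omega)
              rwa [moveN_lt h1] at this
            · refine ⟨((0 : ℕ), (0 : ℕ)), Or.inl ⟨Or.inl rfl, by omega⟩, ?_⟩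
              have := hN (m - 1) q (by omega) hq (by omega) (by omega)
              rwa [moveN_wrap h1, show ((m - 1 - (m - 1) : ℕ), (0 : ℕ)) = ((0 : ℕ), (0 : ℕ)) from
                pair_eq (by omega) rfl] at this
        · rw [hx]
          exact ⟨_, Or.inr (Or.inr rfl), h1N'⟩
        · rw [hx]
          exact ⟨_, Or.inl ⟨Or.inr rfl, by omega⟩, hrE⟩
      by_cases hm2 : m = n + 2
      · -- exceptional family (iv)
        by_cases hτ1 : τ = ((1 : ℕ), (n - 1 : ℕ))
        · have h1 : τ.1 = 1 := by rw [hτ1]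
          have h2 : τ.2 = n - 1 := by rw [hτ1]
          refine Or.inr (Or.inr (Or.inr ⟨by omega, by omega, by omega, Or.inr ?_⟩))
          simp only [tauPlus, if_pos (show b ≤ m - 1 by omega)]
          exact pair_eq (by omega) (by omega)
        · rcases succ_exists hl (⟨by omega, by omega⟩ : Sq m n ((1 : ℕ), (n - 1 : ℕ)))
              (fun h => hτ1 h.symm) with h1E | h1N
          · have h1E' : EdgeIn l ((1 : ℕ), (n - 1 : ℕ)) ((2 : ℕ), (n - 1 : ℕ)) := by
              rwa [moveE_lt (by omega)] at h1E
            by_cases hιτp : ι = ((m - 2 : ℕ), (0 : ℕ))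
            · refine Or.inr (Or.inr (Or.inr ⟨by omega, by omega, by omega, Or.inl ?_⟩))
              rw [hιτp]
              simp only [tauPlus, if_pos (show b ≤ m - 1 by omega)]
              exact pair_eq (by omega) rfl
            exfalso
            obtain ⟨r2, hr2sq, hr2E, hr2EN⟩ :=
              pred_exists hl (⟨by omega, by omega⟩ : Sq m n ((m - 2 : ℕ), (0 : ℕ)))
                (fun h => hιτp h.symm)
            have hr2id : r2 = ((m - 3 : ℕ), (0 : ℕ)) := by
              rcases hr2EN with h | h
              · rcases moveE_inv hr2sq h.symm with ⟨h1, h2⟩ | ⟨h1, h2⟩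
                · have h2' : r2 = ((m - 2 - 1 : ℕ), (0 : ℕ)) := h2
                  rw [h2']
                  exact pair_eq (by omega) rfl
                · exfalso
                  have h1' : m - 2 = 0 := h1
                  omega
              · rcases moveN_inv hr2sq h.symm with ⟨h1, h2⟩ | ⟨h1, h2⟩
                · exact absurd rfl h1
                · exfalso
                  have h2' : r2 = ((m - 1 - (m - 2) : ℕ), (n - 1 : ℕ)) := h2
                  have hr' : r2 = ((1 : ℕ), (n - 1 : ℕ)) := by
                    rw [h2']
                    exact pair_eq (by omega) rfl
                  rw [hr'] at hr2E
                  have heq := edge_src_unique hnd hr2E h1E'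
                  have h0 : (0 : ℕ) = (n - 1 : ℕ) := congrArg Prod.snd heq
                  omega
            rw [hr2id] at hr2E
            have h2N : EdgeIn l ((2 : ℕ), (n - 1 : ℕ)) ((m - 3 : ℕ), (0 : ℕ)) := by
              have := hN 2 (n - 1) (by omega) (by omega) (by omega) (by omega)
              rwa [moveN_wrap (by omega), show ((m - 1 - 2 : ℕ), (0 : ℕ)) = ((m - 3 : ℕ), (0 : ℕ)) from
                pair_eq (by omega) rfl] at this
            apply closed_false hnd (fun x => ((x.1 = 0 ∨ x.1 = m - 1) ∧ x.2 < n) ∨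
              x = ((1 : ℕ), (n - 1 : ℕ)) ∨ x = ((2 : ℕ), (n - 1 : ℕ)) ∨
              x = ((m - 3 : ℕ), (0 : ℕ)) ∨ x = ((m - 2 : ℕ), (0 : ℕ))) ((0 : ℕ), (0 : ℕ))
              (Or.inl ⟨Or.inl rfl, by omega⟩)
            rintro ⟨p, q⟩ (⟨hp, hq⟩ | hx | hx | hx | hx)
            · rcases hp with rfl | rfl
              · by_cases hq1 : q = n - 1
                · subst hq1
                  exact ⟨_, Or.inr (Or.inl rfl), hρE'⟩
                · refine ⟨((0 : ℕ), q + 1), Or.inl ⟨Or.inl rfl, by omega⟩, ?_⟩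
                  have := hN 0 q (by omega) (by omega) (by omega) (by omega)
                  rwa [moveN_lt (by omega)] at this
              · by_cases h1 : q < n - 1
                · refine ⟨((m - 1 : ℕ), q + 1), Or.inl ⟨Or.inr rfl, by omega⟩, ?_⟩
                  have := hN (m - 1) q (by omega) hq (by omega) (by omega)
                  rwa [moveN_lt h1] at this
                · refine ⟨((0 : ℕ), (0 : ℕ)), Or.inl ⟨Or.inl rfl, by omega⟩, ?_⟩
                  have := hN (m - 1) q (by omega) hq (by omega) (by omega)
                  rwa [moveN_wrap h1, show ((m - 1 - (m - 1) : ℕ), (0 : ℕ)) = ((0 : ℕ), (0 : ℕ)) from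
                    pair_eq (by omega) rfl] at this
            · rw [hx]
              exact ⟨_, Or.inr (Or.inr (Or.inl rfl)), h1E'⟩
            · rw [hx]
              exact ⟨_, Or.inr (Or.inr (Or.inr (Or.inl rfl))), h2N⟩
            · rw [hx]
              exact ⟨_, Or.inr (Or.inr (Or.inr (Or.inr rfl))), hr2E⟩
            · rw [hx]
              exact ⟨_, Or.inl ⟨Or.inr rfl, by omega⟩, hrE⟩
          · exfalso
            apply hmain
            rwa [moveN_wrap (by omega), show ((m - 1 - 1 : ℕ), (0 : ℕ)) = ((m - 2 : ℕ), (0 : ℕ)) from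
              pair_eq (by omega) rfl] at h1N
      · -- generic : (1, n-1) is not on the diagonal
        exfalso
        apply hmain
        have := hN 1 (n - 1) (by omega) (by omega) (by omega) (by omega)
        rwa [moveN_wrap (by omega), show ((m - 1 - 1 : ℕ), (0 : ℕ)) = ((m - 2 : ℕ), (0 : ℕ)) from
          pair_eq (by omega) rfl] at this
    · -- ρ travels north : the cycle through columns 0 and m-1 is closed
      exfalso
      apply closed_false hnd (fun x => (x.1 = 0 ∨ x.1 = m - 1) ∧ x.2 < n)
        ((0 : ℕ), (0 : ℕ)) ⟨Or.inl rfl, by omega⟩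
      rintro ⟨p, q⟩ ⟨hp, hq⟩
      rcases hp with rfl | rfl
      · by_cases hq1 : q = n - 1
        · subst hq1
          refine ⟨((m - 1 : ℕ), (0 : ℕ)), ⟨Or.inr rfl, by omega⟩, ?_⟩
          rwa [moveN_wrap (by omega), show ((m - 1 - 0 : ℕ), (0 : ℕ)) = ((m - 1 : ℕ), (0 : ℕ)) from
            pair_eq (by omega) rfl] at hρN
        · refine ⟨((0 : ℕ), q + 1), ⟨Or.inl rfl, by omega⟩, ?_⟩
          have := hN 0 q (by omega) (by omega) (by omega) (by omega)
          rwa [moveN_lt (by omega)] at this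
      · by_cases h1 : q < n - 1
        · refine ⟨((m - 1 : ℕ), q + 1), ⟨Or.inr rfl, by omega⟩, ?_⟩
          have := hN (m - 1) q (by omega) hq (by omega) (by omega)
          rwa [moveN_lt h1] at this
        · refine ⟨((0 : ℕ), (0 : ℕ)), ⟨Or.inl rfl, by omega⟩, ?_⟩
          have := hN (m - 1) q (by omega) hq (by omega) (by omega)
          rwa [moveN_wrap h1, show ((m - 1 - (m - 1) : ℕ), (0 : ℕ)) = ((0 : ℕ), (0 : ℕ)) from
            pair_eq (by omega) rfl] at this

  · -- CASE B : b = m - 1, a = n - 2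
    have ha : a = n - 2 := by omega
    have hτpE : moveE m n (tauPlus m n b) = ((0 : ℕ), (n - 1 : ℕ)) := by
      simp only [tauPlus, if_pos (show b ≤ m - 1 by omega)]
      rw [moveE_wrap (by omega)]
      exact pair_eq rfl (by omega)
    by_cases hττ : τ = ((m - 1 : ℕ), (0 : ℕ))
    · refine Or.inr (Or.inl ?_)
      have h1 : τ.1 = m - 1 := by rw [hττ]
      have h2 : τ.2 = 0 := by rw [hττ]
      rw [hτpE]
      exact pair_eq (by omega) (by omega)
    by_cases hισ : ι = ((0 : ℕ), (n - 1 : ℕ))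
    · exact Or.inl (by rw [hτpE, hισ])
    by_cases hτσ : τ = ((0 : ℕ), (n - 1 : ℕ))
    · -- possible only when m = n ; conclusion (iii), τ-part
      have hmn : m = n := by
        by_contra hmn
        exact hτne 0 (n - 1) (by omega) (by omega) hτσ.symm
      have h1 : τ.1 = 0 := by rw [hτσ]
      have h2 : τ.2 = n - 1 := by rw [hτσ]
      refine Or.inr (Or.inr (Or.inl ⟨hmn, by omega, by omega, Or.inr ?_⟩))
      rw [hτpE]
      simp only [Prod.swap_prod_mk]
      exact pair_eq (by omega) (by omega)
    rcases succ_exists hl (⟨by omega, by omega⟩ : Sq m n ((0 : ℕ), (n - 1 : ℕ)))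
        (fun h => hτσ h.symm) with hσE | hσN
    · -- σ travels east ⇒ m = n
      have hσE' : EdgeIn l ((0 : ℕ), (n - 1 : ℕ)) ((1 : ℕ), (n - 1 : ℕ)) := by
        rwa [moveE_lt (by omega)] at hσE
      have hmn : m = n := by
        by_contra hmn
        have hne := hN 0 (n - 1) (by omega) (by omega) (by omega) (by omega)
        rw [moveN_wrap (by omega)] at hne
        have heq := edge_src_unique hnd hσE' hne
        have h2 : (n - 1 : ℕ) = (0 : ℕ) := congrArg Prod.snd heq
        omega
      by_cases hιτp : ι = ((m - 1 : ℕ), (0 : ℕ))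
      · refine Or.inr (Or.inr (Or.inl ⟨hmn, by omega, by omega, Or.inl ?_⟩))
        rw [hτpE, hιτp]
        simp only [Prod.swap_prod_mk]
        exact pair_eq (by omega) (by omega)
      exfalso
      obtain ⟨r, hrsq, hrE, hrEN⟩ :=
        pred_exists hl (⟨by omega, by omega⟩ : Sq m n ((m - 1 : ℕ), (0 : ℕ))) (fun h => hιτp h.symm)
      have hrid : r = ((m - 2 : ℕ), (0 : ℕ)) := by
        rcases hrEN with h | h
        · rcases moveE_inv hrsq h.symm with ⟨h1, h2⟩ | ⟨h1, h2⟩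
          · have h2' : r = ((m - 1 - 1 : ℕ), (0 : ℕ)) := h2
            rw [h2']
            exact pair_eq (by omega) rfl
          · exfalso
            have h1' : m - 1 = 0 := h1
            omega
        · rcases moveN_inv hrsq h.symm with ⟨h1, h2⟩ | ⟨h1, h2⟩
          · exact absurd rfl h1
          · exfalso
            have h2' : r = ((m - 1 - (m - 1) : ℕ), (n - 1 : ℕ)) := h2
            have hr' : r = ((0 : ℕ), (n - 1 : ℕ)) := by
              rw [h2']
              exact pair_eq (by omega) rfl
            rw [hr'] at hrE
            have heq := edge_src_unique hnd hrE hσE'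
            have h0 : (0 : ℕ) = (n - 1 : ℕ) := congrArg Prod.snd heq
            omega
      rw [hrid] at hrE
      have h1N : EdgeIn l ((1 : ℕ), (n - 1 : ℕ)) ((m - 2 : ℕ), (0 : ℕ)) := by
        have := hN 1 (n - 1) (by omega) (by omega) (by omega) (by omega)
        rwa [moveN_wrap (by omega), show ((m - 1 - 1 : ℕ), (0 : ℕ)) = ((m - 2 : ℕ), (0 : ℕ)) from
          pair_eq (by omega) rfl] at this
      rcases succ_exists hl (⟨by omega, by omega⟩ : Sq m n ((m - 1 : ℕ), (0 : ℕ)))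
          (fun h => hττ h.symm) with hE | hNn
      · have hE' : EdgeIn l ((m - 1 : ℕ), (0 : ℕ)) ((0 : ℕ), (n - 1 : ℕ)) := by
          rwa [moveE_wrap (by omega), show ((0 : ℕ), (n - 1 - 0 : ℕ)) = ((0 : ℕ), (n - 1 : ℕ)) from
            pair_eq rfl (by omega)] at hE
        apply closed_false hnd (fun x => x = ((0 : ℕ), (n - 1 : ℕ)) ∨ x = ((1 : ℕ), (n - 1 : ℕ)) ∨
          x = ((m - 2 : ℕ), (0 : ℕ)) ∨ x = ((m - 1 : ℕ), (0 : ℕ))) ((0 : ℕ), (n - 1 : ℕ)) (Or.inl rfl)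
        rintro x (rfl | rfl | rfl | rfl)
        · exact ⟨_, Or.inr (Or.inl rfl), hσE'⟩
        · exact ⟨_, Or.inr (Or.inr (Or.inl rfl)), h1N⟩
        · exact ⟨_, Or.inr (Or.inr (Or.inr rfl)), hrE⟩
        · exact ⟨_, Or.inl rfl, hE'⟩
      · rw [moveN_lt (by omega)] at hNn
        obtain ⟨r2, hr2sq, hr2E, hr2EN⟩ :=
          pred_exists hl (⟨by omega, by omega⟩ : Sq m n ((0 : ℕ), (n - 1 : ℕ))) (fun h => hισ h.symm)
        have hr2id : r2 = ((0 : ℕ), (n - 2 : ℕ)) := by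
          rcases hr2EN with h | h
          · rcases moveE_inv hr2sq h.symm with ⟨h1, h2⟩ | ⟨h1, h2⟩
            · exact absurd rfl h1
            · exfalso
              have h2' : r2 = ((m - 1 : ℕ), (n - 1 - (n - 1) : ℕ)) := h2
              have hr' : r2 = ((m - 1 : ℕ), (0 : ℕ)) := by
                rw [h2']
                exact pair_eq rfl (by omega)
              rw [hr'] at hr2E
              have heq := edge_src_unique hnd hr2E hNn
              have h0 : (0 : ℕ) = (m - 1 : ℕ) := congrArg Prod.fst heq
              omega
          · rcases moveN_inv hr2sq h.symm with ⟨h1, h2⟩ | ⟨h1, h2⟩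
            · have h2' : r2 = ((0 : ℕ), (n - 1 - 1 : ℕ)) := h2
              rw [h2']
              exact pair_eq rfl (by omega)
            · exfalso
              have h1' : n - 1 = 0 := h1
              omega
        rw [hr2id] at hr2E
        apply closed_false hnd (fun x => ((x.1 = 0 ∨ x.1 = m - 1) ∧ x.2 < n) ∨
          x = ((1 : ℕ), (n - 1 : ℕ)) ∨ x = ((m - 2 : ℕ), (0 : ℕ))) ((0 : ℕ), (0 : ℕ))
          (Or.inl ⟨Or.inl rfl, by omega⟩)
        rintro ⟨p, q⟩ (⟨hp, hq⟩ | hx | hx)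
        · rcases hp with rfl | rfl
          · by_cases hq1 : q = n - 1
            · subst hq1
              exact ⟨_, Or.inr (Or.inl rfl), hσE'⟩
            · by_cases hq2 : q = n - 2
              · subst hq2
                exact ⟨_, Or.inl ⟨Or.inl rfl, by omega⟩, hr2E⟩
              · refine ⟨((0 : ℕ), q + 1), Or.inl ⟨Or.inl rfl, by omega⟩, ?_⟩
                have := hN 0 q (by omega) (by omega) (by omega) (by omega)
                rwa [moveN_lt (by omega)] at this
          · by_cases hq0 : q = 0
            · subst hq0
              exact ⟨((m - 1 : ℕ), (1 : ℕ)), Or.inl ⟨Or.inr rfl, by omega⟩, hNn⟩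
            · by_cases h1 : q < n - 1
              · refine ⟨((m - 1 : ℕ), q + 1), Or.inl ⟨Or.inr rfl, by omega⟩, ?_⟩
                have := hN (m - 1) q (by omega) hq (by omega) (by omega)
                rwa [moveN_lt h1] at this
              · refine ⟨((0 : ℕ), (0 : ℕ)), Or.inl ⟨Or.inl rfl, by omega⟩, ?_⟩
                have := hN (m - 1) q (by omega) hq (by omega) (by omega)
                rwa [moveN_wrap h1, show ((m - 1 - (m - 1) : ℕ), (0 : ℕ)) = ((0 : ℕ), (0 : ℕ)) from
                  pair_eq (by omega) rfl] at this
        · rw [hx]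
          exact ⟨_, Or.inr (Or.inr rfl), h1N⟩
        · rw [hx]
          exact ⟨_, Or.inl ⟨Or.inr rfl, by omega⟩, hrE⟩
    · -- σ travels north
      have hσN' : EdgeIn l ((0 : ℕ), (n - 1 : ℕ)) ((m - 1 : ℕ), (0 : ℕ)) := by
        rwa [moveN_wrap (by omega), show ((m - 1 - 0 : ℕ), (0 : ℕ)) = ((m - 1 : ℕ), (0 : ℕ)) from
          pair_eq (by omega) rfl] at hσN
      exfalso
      obtain ⟨r, hrsq, hrE, hrEN⟩ :=
        pred_exists hl (⟨by omega, by omega⟩ : Sq m n ((0 : ℕ), (n - 1 : ℕ))) (fun h => hισ h.symm)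
      rcases hrEN with h | h
      · rcases moveE_inv hrsq h.symm with ⟨h1, h2⟩ | ⟨h1, h2⟩
        · exact absurd rfl h1
        · have hr' : r = ((m - 1 : ℕ), (0 : ℕ)) := by
            have h2' : r = ((m - 1 : ℕ), (n - 1 - (n - 1) : ℕ)) := h2
            rw [h2']
            exact pair_eq rfl (by omega)
          rw [hr'] at hrE
          apply closed_false hnd (fun x => x = ((0 : ℕ), (n - 1 : ℕ)) ∨ x = ((m - 1 : ℕ), (0 : ℕ)))
            ((0 : ℕ), (n - 1 : ℕ)) (Or.inl rfl)
          rintro x (rfl | rfl)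
          · exact ⟨_, Or.inr rfl, hσN'⟩
          · exact ⟨_, Or.inl rfl, hrE⟩
      · rcases moveN_inv hrsq h.symm with ⟨h1, h2⟩ | ⟨h1, h2⟩
        · have hr' : r = ((0 : ℕ), (n - 2 : ℕ)) := by
            have h2' : r = ((0 : ℕ), (n - 1 - 1 : ℕ)) := h2
            rw [h2']
            exact pair_eq rfl (by omega)
          rw [hr'] at hrE
          rcases succ_exists hl (⟨by omega, by omega⟩ : Sq m n ((m - 1 : ℕ), (0 : ℕ)))
              (fun h => hττ h.symm) with hE | hNn
          · have hE' : EdgeIn l ((m - 1 : ℕ), (0 : ℕ)) ((0 : ℕ), (n - 1 : ℕ)) := by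
              rwa [moveE_wrap (by omega), show ((0 : ℕ), (n - 1 - 0 : ℕ)) = ((0 : ℕ), (n - 1 : ℕ)) from
                pair_eq rfl (by omega)] at hE
            have heq := edge_tgt_unique hnd hE' hrE
            have h0 : (m - 1 : ℕ) = (0 : ℕ) := congrArg Prod.fst heq
            omega
          · rw [moveN_lt (by omega)] at hNn
            apply closed_false hnd (fun x => (x.1 = 0 ∨ x.1 = m - 1) ∧ x.2 < n)
              ((0 : ℕ), (0 : ℕ)) ⟨Or.inl rfl, by omega⟩
            rintro ⟨p, q⟩ ⟨hp, hq⟩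
            rcases hp with rfl | rfl
            · by_cases hq1 : q = n - 1
              · subst hq1
                exact ⟨_, ⟨Or.inr rfl, by omega⟩, hσN'⟩
              · by_cases hq2 : q = n - 2
                · subst hq2
                  exact ⟨_, ⟨Or.inl rfl, by omega⟩, hrE⟩
                · refine ⟨((0 : ℕ), q + 1), ⟨Or.inl rfl, by omega⟩, ?_⟩
                  have := hN 0 q (by omega) (by omega) (by omega) (by omega)
                  rwa [moveN_lt (by omega)] at this
            · by_cases hq0 : q = 0
              · subst hq0
                exact ⟨((m - 1 : ℕ), (1 : ℕ)), ⟨Or.inr rfl, by omega⟩, hNn⟩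
              · by_cases h1 : q < n - 1
                · refine ⟨((m - 1 : ℕ), q + 1), ⟨Or.inr rfl, by omega⟩, ?_⟩
                  have := hN (m - 1) q (by omega) hq (by omega) (by omega)
                  rwa [moveN_lt h1] at this
                · refine ⟨((0 : ℕ), (0 : ℕ)), ⟨Or.inl rfl, by omega⟩, ?_⟩
                  have := hN (m - 1) q (by omega) hq (by omega) (by omega)
                  rwa [moveN_wrap h1, show ((m - 1 - (m - 1) : ℕ), (0 : ℕ)) = ((0 : ℕ), (0 : ℕ)) from
                    pair_eq (by omega) rfl] at this
        · exfalso
          have h1' : n - 1 = 0 := h1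
          omega

  · -- CASE C : b ≥ m
    have hy2 : b - (m - 1) ≤ n - 2 := by omega
    have ha3 : a ≤ n - 3 := by omega
    have hτpE : moveE m n (tauPlus m n b) = ((0 : ℕ), (a + 1 : ℕ)) := by
      simp only [tauPlus, if_neg (show ¬ b ≤ m - 1 by omega)]
      rw [moveE_wrap (by omega)]
      exact pair_eq rfl (by omega)
    by_cases hττ : τ = ((m - 1 : ℕ), (b - (m - 1) : ℕ))
    · refine Or.inr (Or.inl ?_)
      have h1 : τ.1 = m - 1 := by rw [hττ]
      have h2 : τ.2 = b - (m - 1) := by rw [hττ]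
      rw [hτpE]
      exact pair_eq (by omega) (by omega)
    by_cases hισ : ι = ((0 : ℕ), (a + 1 : ℕ))
    · exact Or.inl (by rw [hτpE, hισ])
    exfalso
    obtain ⟨r, hrsq, hrE, hrEN⟩ :=
      pred_exists hl (⟨by omega, by omega⟩ : Sq m n ((0 : ℕ), (a + 1 : ℕ))) (fun h => hισ h.symm)
    rcases hrEN with h | h
    · rcases moveE_inv hrsq h.symm with ⟨h1, h2⟩ | ⟨h1, h2⟩
      · exact h1 rfl
      · -- r = τ_+ ; closure on the partial cycle from σ up to τ_+
        have hr' : r = ((m - 1 : ℕ), (b - (m - 1) : ℕ)) := by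
          have h2' : r = ((m - 1 : ℕ), (n - 1 - (a + 1) : ℕ)) := h2
          rw [h2']
          exact pair_eq rfl (by omega)
        rw [hr'] at hrE
        apply closed_false hnd
          (fun x => (x.1 = 0 ∧ a + 1 ≤ x.2 ∧ x.2 < n) ∨ (x.1 = m - 1 ∧ x.2 ≤ b - (m - 1)))
          ((0 : ℕ), (a + 1 : ℕ)) (Or.inl ⟨rfl, le_refl _, by omega⟩)
        rintro ⟨p, q⟩ (⟨rfl, hq1, hq2⟩ | ⟨rfl, hq⟩)
        · by_cases h1 : q < n - 1
          · refine ⟨((0 : ℕ), q + 1), Or.inl ⟨rfl, by omega, by omega⟩, ?_⟩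
            have := hN 0 q (by omega) (by omega) (by omega) (by omega)
            rwa [moveN_lt h1] at this
          · refine ⟨((m - 1 : ℕ), (0 : ℕ)), Or.inr ⟨rfl, by omega⟩, ?_⟩
            have := hN 0 q (by omega) (by omega) (by omega) (by omega)
            rwa [moveN_wrap h1,
              show ((m - 1 - 0 : ℕ), (0 : ℕ)) = ((m - 1 : ℕ), (0 : ℕ)) from pair_eq (by omega) rfl] at this
        · by_cases hqy : q = b - (m - 1)
          · subst hqy
            exact ⟨_, Or.inl ⟨rfl, by omega, by omega⟩, hrE⟩
          · refine ⟨((m - 1 : ℕ), q + 1), Or.inr ⟨rfl, by omega⟩, ?_⟩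
            have := hN (m - 1) q (by omega) (by omega) (by omega) (by omega)
            rwa [moveN_lt (by omega)] at this
    · rcases moveN_inv hrsq h.symm with ⟨h1, h2⟩ | ⟨h1, h2⟩
      · -- r = (0, a) ; then consider the successor of τ_+
        have hr' : r = ((0 : ℕ), (a : ℕ)) := by
          have h2' : r = ((0 : ℕ), (a + 1 - 1 : ℕ)) := h2
          rw [h2']
          exact pair_eq rfl (by omega)
        rw [hr'] at hrE
        rcases succ_exists hl (⟨by omega, by omega⟩ : Sq m n ((m - 1 : ℕ), (b - (m - 1) : ℕ)))
            (fun h => hττ h.symm) with hE | hNn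
        · rw [moveE_wrap (by omega)] at hE
          have hE' : EdgeIn l ((m - 1 : ℕ), (b - (m - 1) : ℕ)) ((0 : ℕ), (a + 1 : ℕ)) := by
            rwa [show ((0 : ℕ), (n - 1 - (b - (m - 1)) : ℕ)) = ((0 : ℕ), (a + 1 : ℕ)) from pair_eq rfl (by omega)] at hE
          have heq := edge_tgt_unique hnd hE' hrE
          have h0 : (m - 1 : ℕ) = 0 := congrArg Prod.fst heq
          omega
        · rw [moveN_lt (by omega)] at hNn
          apply closed_false hnd (fun x => (x.1 = 0 ∨ x.1 = m - 1) ∧ x.2 < n)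
            ((0 : ℕ), (0 : ℕ)) ⟨Or.inl rfl, by omega⟩
          rintro ⟨p, q⟩ ⟨hp, hq⟩
          rcases hp with rfl | rfl
          · by_cases hqa : q = a
            · subst hqa
              exact ⟨_, ⟨Or.inl rfl, by omega⟩, hrE⟩
            · by_cases h1 : q < n - 1
              · refine ⟨((0 : ℕ), q + 1), ⟨Or.inl rfl, by omega⟩, ?_⟩
                have := hN 0 q (by omega) (by omega) (by omega) (by omega)
                rwa [moveN_lt h1] at this
              · refine ⟨((m - 1 : ℕ), (0 : ℕ)), ⟨Or.inr rfl, by omega⟩, ?_⟩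
                have := hN 0 q (by omega) (by omega) (by omega) (by omega)
                rwa [moveN_wrap h1,
                  show ((m - 1 - 0 : ℕ), (0 : ℕ)) = ((m - 1 : ℕ), (0 : ℕ)) from pair_eq (by omega) rfl] at this
          · by_cases hqy : q = b - (m - 1)
            · subst hqy
              exact ⟨_, ⟨Or.inr rfl, by omega⟩, hNn⟩
            · by_cases h1 : q < n - 1
              · refine ⟨((m - 1 : ℕ), q + 1), ⟨Or.inr rfl, by omega⟩, ?_⟩
                have := hN (m - 1) q (by omega) (by omega) (by omega) (by omega)
                rwa [moveN_lt h1] at this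
              · refine ⟨((0 : ℕ), (0 : ℕ)), ⟨Or.inl rfl, by omega⟩, ?_⟩
                have := hN (m - 1) q (by omega) (by omega) (by omega) (by omega)
                rwa [moveN_wrap h1,
                  show ((m - 1 - (m - 1) : ℕ), (0 : ℕ)) = ((0 : ℕ), (0 : ℕ)) from pair_eq (by omega) rfl] at this
      · have h1' : a + 1 = 0 := h1
        omega


end ProjBoard
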